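/- Let H be a real Hilbert space, write ⟨x⟩ := (1 + x²)^{1/2}, and let 0 < α₁ < α < α₂ satisfy 2α₁ ≤ α₂ − α. Then there is a constant C > 0, depending only on α₁, α, α₂, with the following property: for all continuously differentiable v, w : ℝ → H with ‖e^{−α₁⟨·⟩} v'‖_{L²(ℝ,H)} < ∞, ‖e^{−α⟨·⟩} w‖_{L²(ℝ,H)} < ∞, and ‖e^{−α₂⟨·⟩} w'‖_{L²(ℝ,H)} < ∞, one has ∫_ℝ e^{−2α₂⟨x⟩} ‖w(x)‖² ‖v'(x)‖² dx ≤ C ‖e^{−α₁⟨·⟩} v'‖²_{L²(ℝ,H)} · ( ‖e^{−α⟨·⟩} w‖_{L²(ℝ,H)} + ‖e^{−α₂⟨·⟩} w'‖_{L²(ℝ,H)} )². -/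

import Mathlib

open MeasureTheory

set_option synthInstance.maxHeartbeats 400000
set_option maxHeartbeats 1000000

/-- The Japanese bracket `⟨x⟩ = (1 + x²)^{1/2}`. -/
noncomputable def jbracket (x : ℝ) : ℝ := Real.sqrt (1 + x ^ 2)

lemma one_le_jbracket (x : ℝ) : 1 ≤ jbracket x := by
  rw [show (1:ℝ) = Real.sqrt 1 by simp]
  exact Real.sqrt_le_sqrt (by nlinarith [sq_nonneg x])

lemma hasDerivAt_jbracket (x : ℝ) : HasDerivAt jbracket (x / jbracket x) x := by
  have h1 : HasDerivAt (fun x : ℝ => 1 + x ^ 2) (2 * x) x := by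
    simpa using ((hasDerivAt_pow 2 x).const_add 1)
  have h2 : (0:ℝ) < 1 + x ^ 2 := by positivity
  have := (Real.hasDerivAt_sqrt h2.ne').comp x h1
  convert this using 1
  · rfl
  · rfl
  · rfl
  have h3 : Real.sqrt (1 + x ^ 2) ≠ 0 := by positivity
  unfold jbracket
  field_simp

lemma abs_sc_le_one (x : ℝ) : |x / jbracket x| ≤ 1 := by
  have h1 := one_le_jbracket x
  have hj : (0:ℝ) < jbracket x := lt_of_lt_of_le one_pos h1
  rw [abs_div, abs_of_pos hj, div_le_one hj]
  have : |x| = Real.sqrt (x^2) := by rw [Real.sqrt_sq_eq_abs]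
  rw [this, jbracket]
  exact Real.sqrt_le_sqrt (by linarith)

lemma continuous_jbracket : Continuous jbracket :=
  continuous_iff_continuousAt.2 fun x => (hasDerivAt_jbracket x).continuousAt

/-- supremum bound via FTC and averaging. -/
lemma sup_le_int_add_int (h h' : ℝ → ℝ) (hpos : ∀ x, 0 ≤ h x)
    (hd : ∀ x, HasDerivAt h (h' x) x) (hcont' : Continuous h')
    (hinth : Integrable h) (hint' : Integrable fun x => |h' x|) (x : ℝ) :
    h x ≤ (∫ y, h y) + ∫ y, |h' y| := by
  set J := ∫ y, |h' y| with hJ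
  have hc : Continuous h := continuous_iff_continuousAt.2 fun y => (hd y).continuousAt
  have key : ∀ y : ℝ, h x ≤ h y + J := by
    intro y
    have hsub : ∫ z in y..x, h' z = h x - h y :=
      intervalIntegral.integral_eq_sub_of_hasDerivAt (fun z _ => hd z)
        (hcont'.intervalIntegrable _ _)
    have habs : |h x - h y| ≤ J := by
      rw [← hsub]
      calc |∫ z in y..x, h' z| ≤ ∫ z in Set.uIoc y x, |h' z| := by
            simpa [Real.norm_eq_abs] using
              intervalIntegral.norm_integral_le_integral_norm_uIoc (f := h') (a := y) (b := x)
        _ ≤ J := setIntegral_le_integral hint' (ae_of_all _ fun z => abs_nonneg _)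
    have := (abs_le.mp habs).2
    linarith
  have h01 : (0:ℝ) ≤ 1 := zero_le_one
  have hmono : ∫ _y in (0:ℝ)..1, h x ≤ ∫ y in (0:ℝ)..1, (h y + J) :=
    intervalIntegral.integral_mono_on h01 (intervalIntegrable_const)
      ((hc.add continuous_const).intervalIntegrable _ _) (fun y _ => key y)
  have e1 : ∫ _y in (0:ℝ)..1, h x = h x := by simp
  have e2 : ∫ y in (0:ℝ)..1, (h y + J) = (∫ y in (0:ℝ)..1, h y) + J := by
    rw [intervalIntegral.integral_add (hc.intervalIntegrable _ _) intervalIntegrable_const]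
    simp
  have e3 : ∫ y in (0:ℝ)..1, h y ≤ ∫ y, h y := by
    rw [intervalIntegral.integral_of_le h01]
    exact setIntegral_le_integral hinth (ae_of_all _ hpos)
  rw [e1, e2] at hmono
  linarith


/-- **The key mixed-norm estimate (obs) for the center manifold construction.**
For `0 < α₁ < α < α₂` with `2α₁ ≤ α₂ − α`, there is `C > 0` depending only on the
weights such that
`∫ e^{−2α₂⟨x⟩}‖w(x)‖²‖v'(x)‖² dx ≤ C ‖e^{−α₁⟨·⟩}v'‖²_{L²}
  (‖e^{−α⟨·⟩}w‖_{L²} + ‖e^{−α₂⟨·⟩}w'‖_{L²})²`. -/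
theorem mixed_norm_key_estimate
    {H : Type*} [NormedAddCommGroup H] [InnerProductSpace ℝ H]
    (α₁ α α₂ : ℝ) (hα₁ : 0 < α₁) (h₁₂ : α₁ < α) (h₂₃ : α < α₂)
    (hsep : 2 * α₁ ≤ α₂ - α) :
    ∃ C : ℝ, 0 < C ∧
      ∀ v w : ℝ → H, ContDiff ℝ 1 v → ContDiff ℝ 1 w →
        Integrable (fun x : ℝ => Real.exp (-(2 * α₁) * jbracket x) * ‖deriv v x‖ ^ 2) →
        Integrable (fun x : ℝ => Real.exp (-(2 * α) * jbracket x) * ‖w x‖ ^ 2) →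
        Integrable (fun x : ℝ => Real.exp (-(2 * α₂) * jbracket x) * ‖deriv w x‖ ^ 2) →
        ∫ x : ℝ, Real.exp (-(2 * α₂) * jbracket x) * ‖w x‖ ^ 2 * ‖deriv v x‖ ^ 2 ≤
          C * (∫ x : ℝ, Real.exp (-(2 * α₁) * jbracket x) * ‖deriv v x‖ ^ 2) *
            (Real.sqrt (∫ x : ℝ, Real.exp (-(2 * α) * jbracket x) * ‖w x‖ ^ 2) +
              Real.sqrt
                (∫ x : ℝ, Real.exp (-(2 * α₂) * jbracket x) * ‖deriv w x‖ ^ 2)) ^ 2 := by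
  set β := α₂ - α₁ with hβdef
  have hβ : 0 < β := by simp only [hβdef]; linarith
  refine ⟨2 + 2 * β, by linarith, ?_⟩
  intro v w hv hw Dint Aint Bint
  -- abbreviations
  set E : ℝ → ℝ := fun x => Real.exp (-(2 * β) * jbracket x) with hE
  set h : ℝ → ℝ := fun x => E x * ‖w x‖ ^ 2 with hh
  set h' : ℝ → ℝ := fun x =>
      (E x * (-(2 * β) * (x / jbracket x))) * ‖w x‖ ^ 2
        + E x * ((inner ℝ (w x) (deriv w x) : ℝ) + (inner ℝ (deriv w x) (w x) : ℝ)) with hh'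
  have hwd : ∀ x, HasDerivAt w (deriv w x) x := fun x =>
    ((hw.differentiable one_ne_zero) x).hasDerivAt
  have hwc : Continuous w := hw.continuous
  have hwdc : Continuous (deriv w) := (hw.continuous_deriv le_rfl)
  have hvdc : Continuous (deriv v) := (hv.continuous_deriv le_rfl)
  have hEpos : ∀ x, 0 < E x := fun x => Real.exp_pos _
  have hEc : Continuous E :=
    Real.continuous_exp.comp (continuous_const.mul continuous_jbracket)
  have hjne : ∀ x : ℝ, jbracket x ≠ 0 := fun x =>
    (lt_of_lt_of_le one_pos (one_le_jbracket x)).ne'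
  have hscc : Continuous (fun x : ℝ => x / jbracket x) :=
    continuous_id.div continuous_jbracket hjne
  have hpos : ∀ x, 0 ≤ h x := fun x => by positivity
  -- derivative of E
  have hEd : ∀ x, HasDerivAt E (E x * (-(2 * β) * (x / jbracket x))) x := by
    intro x
    exact (((hasDerivAt_jbracket x).const_mul (-(2 * β))).exp)
  -- derivative of ‖w‖²
  have hnd : ∀ x, HasDerivAt (fun t => ‖w t‖ ^ 2)
      ((inner ℝ (w x) (deriv w x) : ℝ) + (inner ℝ (deriv w x) (w x) : ℝ)) x := by
    intro x
    have h1 := HasDerivAt.inner ℝ (hwd x) (hwd x)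
    have e : (fun t => (inner ℝ (w t) (w t) : ℝ)) = fun t => ‖w t‖ ^ 2 :=
      funext fun t => real_inner_self_eq_norm_sq _
    rwa [e] at h1
  have hhd : ∀ x, HasDerivAt h (h' x) x := fun x => (hEd x).mul (hnd x)
  have hcont' : Continuous h' := by
    apply Continuous.add
    · exact ((hEc.mul (continuous_const.mul hscc)).mul (hwc.norm.pow 2))
    · exact hEc.mul ((hwc.inner hwdc).add (hwdc.inner hwc))
  have hhc : Continuous h := hEc.mul (hwc.norm.pow 2)
  -- pointwise comparison E ≤ lighter weights
  have hEleA : ∀ x, E x ≤ Real.exp (-(2 * α) * jbracket x) := by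
    intro x
    have ht := one_le_jbracket x
    apply Real.exp_le_exp.2
    nlinarith
  -- integrability of h
  have hinth : Integrable h := by
    apply Aint.mono hhc.aestronglyMeasurable
    filter_upwards with x
    rw [Real.norm_eq_abs, Real.norm_eq_abs, abs_of_nonneg (hpos x),
      abs_of_nonneg (by positivity)]
    exact mul_le_mul_of_nonneg_right (hEleA x) (by positivity)
  -- the dominating function for h'
  set g : ℝ → ℝ := fun x => 2 * β * h x
      + (Real.exp (-(2 * α) * jbracket x) * ‖w x‖ ^ 2
        + Real.exp (-(2 * α₂) * jbracket x) * ‖deriv w x‖ ^ 2) with hg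
  have hgint : Integrable g := (hinth.const_mul _).add (Aint.add Bint)
  have habs : ∀ x, |h' x| ≤ g x := by
    intro x
    have hsc := abs_le.mp (abs_sc_le_one x)
    have ht := one_le_jbracket x
    set p := Real.exp (-α * (jbracket x)) with hp
    set q := Real.exp (-α₂ * (jbracket x)) with hq
    have hp2 : Real.exp (-(2 * α) * (jbracket x)) = p ^ 2 := by
      rw [hp, sq, ← Real.exp_add]; congr 1; ring
    have hq2 : Real.exp (-(2 * α₂) * (jbracket x)) = q ^ 2 := by
      rw [hq, sq, ← Real.exp_add]; congr 1; ring
    have hEpq : E x ≤ p * q := by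
      rw [hp, hq, ← Real.exp_add]
      apply Real.exp_le_exp.2
      nlinarith
    have hipos : 0 < p := Real.exp_pos _
    have hqpos : 0 < q := Real.exp_pos _
    have hE0 := hEpos x
    have hinner : |(inner ℝ (w x) (deriv w x) : ℝ)| ≤ ‖w x‖ * ‖deriv w x‖ :=
      abs_real_inner_le_norm _ _
    have hinner2 : |(inner ℝ (deriv w x) (w x) : ℝ)| ≤ ‖w x‖ * ‖deriv w x‖ := by
      rw [real_inner_comm]; exact hinner
    have hi1 := abs_le.mp hinner
    have hi2 := abs_le.mp hinner2
    have hn : (0:ℝ) ≤ ‖w x‖ := norm_nonneg _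
    have hm : (0:ℝ) ≤ ‖deriv w x‖ := norm_nonneg _
    have b1 : |E x * (-(2 * β) * (x / (jbracket x))) * ‖w x‖ ^ 2| ≤ 2 * β * (E x * ‖w x‖ ^ 2) := by
      rw [abs_mul, abs_mul, abs_of_pos hE0, abs_of_nonneg (sq_nonneg ‖w x‖), abs_mul,
        abs_neg, abs_of_pos (by linarith : (0:ℝ) < 2 * β)]
      have h1 : E x * (2 * β * |x / (jbracket x)|) ≤ E x * (2 * β * 1) :=
        mul_le_mul_of_nonneg_left (mul_le_mul_of_nonneg_left (abs_sc_le_one x)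
          (by linarith)) hE0.le
      nlinarith [sq_nonneg ‖w x‖]
    have b2 : |E x * ((inner ℝ (w x) (deriv w x) : ℝ) + (inner ℝ (deriv w x) (w x) : ℝ))|
        ≤ p ^ 2 * ‖w x‖ ^ 2 + q ^ 2 * ‖deriv w x‖ ^ 2 := by
      rw [abs_mul, abs_of_pos hE0]
      have h1 : |(inner ℝ (w x) (deriv w x) : ℝ) + (inner ℝ (deriv w x) (w x) : ℝ)|
          ≤ 2 * (‖w x‖ * ‖deriv w x‖) := by
        calc _ ≤ |(inner ℝ (w x) (deriv w x) : ℝ)| + |(inner ℝ (deriv w x) (w x) : ℝ)| :=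
              abs_add_le _ _
          _ ≤ 2 * (‖w x‖ * ‖deriv w x‖) := by linarith
      calc E x * |(inner ℝ (w x) (deriv w x) : ℝ) + (inner ℝ (deriv w x) (w x) : ℝ)|
          ≤ (p * q) * (2 * (‖w x‖ * ‖deriv w x‖)) := by
            apply mul_le_mul hEpq h1 (abs_nonneg _) (by positivity)
        _ ≤ p ^ 2 * ‖w x‖ ^ 2 + q ^ 2 * ‖deriv w x‖ ^ 2 := by
            nlinarith [sq_nonneg (p * ‖w x‖ - q * ‖deriv w x‖)]
    calc |h' x| ≤ |E x * (-(2 * β) * (x / (jbracket x))) * ‖w x‖ ^ 2|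
          + |E x * ((inner ℝ (w x) (deriv w x) : ℝ) + (inner ℝ (deriv w x) (w x) : ℝ))| := by
          rw [hh']; exact abs_add_le _ _
      _ ≤ 2 * β * (E x * ‖w x‖ ^ 2)
          + (p ^ 2 * ‖w x‖ ^ 2 + q ^ 2 * ‖deriv w x‖ ^ 2) := add_le_add b1 b2
      _ = g x := by
          simp only [hg, hh]
          rw [hp2, hq2]
  have hint' : Integrable (fun x => |h' x|) := by
    apply hgint.mono hcont'.abs.aestronglyMeasurable
    filter_upwards with x
    rw [Real.norm_eq_abs, abs_abs, Real.norm_eq_abs]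
    exact (habs x).trans (le_abs_self _)
  -- set up the three integrals
  set D := ∫ x : ℝ, Real.exp (-(2 * α₁) * jbracket x) * ‖deriv v x‖ ^ 2 with hD
  set A2 := ∫ x : ℝ, Real.exp (-(2 * α) * jbracket x) * ‖w x‖ ^ 2 with hA2
  set B2 := ∫ x : ℝ, Real.exp (-(2 * α₂) * jbracket x) * ‖deriv w x‖ ^ 2 with hB2
  set A := Real.sqrt A2 with hA
  set B := Real.sqrt B2 with hB
  have hA2nn : 0 ≤ A2 := integral_nonneg fun x => by positivity
  have hB2nn : 0 ≤ B2 := integral_nonneg fun x => by positivity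
  have hAsq : A ^ 2 = A2 := Real.sq_sqrt hA2nn
  have hBsq : B ^ 2 = B2 := Real.sq_sqrt hB2nn
  have hAnn : 0 ≤ A := Real.sqrt_nonneg _
  have hBnn : 0 ≤ B := Real.sqrt_nonneg _
  -- integral bounds
  have hIh : ∫ x, h x ≤ A2 := by
    apply integral_mono hinth Aint
    intro x
    exact mul_le_mul_of_nonneg_right (hEleA x) (by positivity)
  have hIg : ∫ x, g x = 2 * β * (∫ x, h x) + (A2 + B2) := by
    have e1 : ∫ x, g x = (∫ x, 2 * β * h x)
        + ∫ x, (Real.exp (-(2 * α) * jbracket x) * ‖w x‖ ^ 2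
          + Real.exp (-(2 * α₂) * jbracket x) * ‖deriv w x‖ ^ 2) :=
      integral_add (hinth.const_mul _) (Aint.add Bint)
    have e2 : ∫ x, (Real.exp (-(2 * α) * jbracket x) * ‖w x‖ ^ 2
          + Real.exp (-(2 * α₂) * jbracket x) * ‖deriv w x‖ ^ 2) = A2 + B2 :=
      integral_add Aint Bint
    rw [e1, e2, integral_const_mul]
  have hI' : ∫ x, |h' x| ≤ 2 * β * (∫ x, h x) + (A2 + B2) := by
    rw [← hIg]; exact integral_mono hint' hgint habs
  have hIhnn : 0 ≤ ∫ x, h x := integral_nonneg hpos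
  -- the sup bound
  have hsup : ∀ x, h x ≤ (2 + 2 * β) * (A + B) ^ 2 := by
    intro x
    have h1 := sup_le_int_add_int h h' hpos hhd hcont' hinth hint' x
    nlinarith [mul_nonneg hAnn hBnn]
  -- final estimate
  have hsplit : ∀ x : ℝ, Real.exp (-(2 * α₂) * jbracket x)
      = E x * Real.exp (-(2 * α₁) * jbracket x) := by
    intro x
    rw [hE, ← Real.exp_add]
    congr 1
    simp only [hβdef]; ring
  have hDintM := Dint.const_mul ((2 + 2 * β) * (A + B) ^ 2)
  have hptle : ∀ x : ℝ, Real.exp (-(2 * α₂) * jbracket x) * ‖w x‖ ^ 2 * ‖deriv v x‖ ^ 2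
      ≤ ((2 + 2 * β) * (A + B) ^ 2) * (Real.exp (-(2 * α₁) * jbracket x) * ‖deriv v x‖ ^ 2) := by
    intro x
    rw [hsplit x]
    have := mul_le_mul_of_nonneg_right (hsup x)
      (by positivity : (0:ℝ) ≤ Real.exp (-(2 * α₁) * jbracket x) * ‖deriv v x‖ ^ 2)
    calc E x * Real.exp (-(2 * α₁) * jbracket x) * ‖w x‖ ^ 2 * ‖deriv v x‖ ^ 2
        = h x * (Real.exp (-(2 * α₁) * jbracket x) * ‖deriv v x‖ ^ 2) := by rw [hh]; ring
      _ ≤ ((2 + 2 * β) * (A + B) ^ 2) * (Real.exp (-(2 * α₁) * jbracket x) * ‖deriv v x‖ ^ 2) :=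
          this
  have hlhsint : Integrable (fun x : ℝ =>
      Real.exp (-(2 * α₂) * jbracket x) * ‖w x‖ ^ 2 * ‖deriv v x‖ ^ 2) := by
    apply hDintM.mono
    · exact (((Real.continuous_exp.comp (continuous_const.mul continuous_jbracket)).mul
        (hwc.norm.pow 2)).mul (hvdc.norm.pow 2)).aestronglyMeasurable
    · filter_upwards with x
      rw [Real.norm_eq_abs, Real.norm_eq_abs, abs_of_nonneg (by positivity)]
      exact (hptle x).trans (le_abs_self _)
  calc ∫ x : ℝ, Real.exp (-(2 * α₂) * jbracket x) * ‖w x‖ ^ 2 * ‖deriv v x‖ ^ 2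
      ≤ ∫ x : ℝ, ((2 + 2 * β) * (A + B) ^ 2)
          * (Real.exp (-(2 * α₁) * jbracket x) * ‖deriv v x‖ ^ 2) :=
        integral_mono hlhsint hDintM hptle
    _ = (2 + 2 * β) * D * (A + B) ^ 2 := by rw [integral_const_mul, ← hD]; ring
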